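/- arXiv:0805.3320 — 4 statements merged into one kernel-verified Lean document; each statement's English description precedes it below -/
import Mathlib

section
/- Let X be a nondegenerate indecomposable continuum. Then each composant of X is a proper subset of X which is of first category (meager) in X. -/
def IsSubcontinuum {E : Type*} [MetricSpace E] (X A : Set E) : Prop :=
  A ⊆ X ∧ IsCompact A ∧ IsConnected A

def IsIndecomposable {E : Type*} [MetricSpace E] (X : Set E) : Prop :=
  ¬ ∃ A B : Set E, IsSubcontinuum X A ∧ IsSubcontinuum X B ∧ A ≠ X ∧ B ≠ X ∧ A ∪ B = X

def Composant {E : Type*} [MetricSpace E] (X : Set E) (p : E) : Set E :=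
  ⋃₀ {A : Set E | IsSubcontinuum X A ∧ A ≠ X ∧ p ∈ A}

open Set Topology TopologicalSpace

section Aux

variable {E : Type*} [MetricSpace E] {X : Set E}

/-- If `X \ A` is covered by open sets `u, v` with disjoint traces, then
`A ∪ ((X \ A) ∩ u)` is a proper subcontinuum of `X`. -/
lemma piece_lemma (hXc : IsCompact X) (hXconn : IsConnected X)
    (hA : IsSubcontinuum X A) {u v : Set E} (hu : IsOpen u) (hv : IsOpen v)
    (hcover : X \ A ⊆ u ∪ v) (hdisj : (X \ A) ∩ (u ∩ v) = ∅)
    (hVne : ((X \ A) ∩ v).Nonempty) :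
    IsSubcontinuum X (A ∪ ((X \ A) ∩ u)) ∧ A ∪ ((X \ A) ∩ u) ≠ X := by
  obtain ⟨hAX, hAcomp, hAconn⟩ := hA
  set W := X \ A with hW
  set U := W ∩ u with hUdef
  set V := W ∩ v with hVdef
  have hXclosed : IsClosed X := hXc.isClosed
  have hAclosed : IsClosed A := hAcomp.isClosed
  -- basic set identities
  have hUVdisj : U ∩ V = ∅ := by
    apply eq_empty_iff_forall_notMem.mpr
    rintro x ⟨⟨hxW, hxu⟩, -, hxv⟩
    exact eq_empty_iff_forall_notMem.mp hdisj x ⟨hxW, hxu, hxv⟩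
  have hXsplit : A ∪ U ∪ V = X := by
    apply Subset.antisymm
    · rintro x (⟨h | h⟩ | h)
      · exact hAX h
      · exact h.1.1
      · exact h.1.1
    · intro x hx
      by_cases hxA : x ∈ A
      · exact Or.inl (Or.inl hxA)
      · have hxW : x ∈ W := ⟨hx, hxA⟩
        rcases hcover hxW with h | h
        · exact Or.inl (Or.inr ⟨hxW, h⟩)
        · exact Or.inr ⟨hxW, h⟩
  have hAU_eq : A ∪ U = X \ V := by
    apply Subset.antisymm
    · rintro x (h | h)
      · exact ⟨hAX h, fun hxV => hxV.1.2 h⟩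
      · exact ⟨h.1.1, fun hxV => eq_empty_iff_forall_notMem.mp hUVdisj x ⟨h, hxV⟩⟩
    · rintro x ⟨hxX, hxV⟩
      by_cases hxA : x ∈ A
      · exact Or.inl hxA
      · have hxW : x ∈ W := ⟨hxX, hxA⟩
        rcases hcover hxW with h | h
        · exact Or.inr ⟨hxW, h⟩
        · exact absurd ⟨hxW, h⟩ hxV
  have hAU_eq2 : A ∪ U = A ∪ (X \ v) := by
    rw [hAU_eq]
    apply Subset.antisymm
    · rintro x ⟨hxX, hxV⟩
      by_cases hxA : x ∈ A
      · exact Or.inl hxA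
      · refine Or.inr ⟨hxX, fun hxv => hxV ⟨⟨hxX, hxA⟩, hxv⟩⟩
    · rintro x (h | h)
      · exact ⟨hAX h, fun hxV => hxV.1.2 h⟩
      · exact ⟨h.1, fun hxV => h.2 hxV.2⟩
  have hAUclosed : IsClosed (A ∪ U) := by
    rw [hAU_eq2]
    exact hAclosed.union (hXclosed.sdiff hv)
  have hAUX : A ∪ U ⊆ X := by
    rintro x (h | h)
    · exact hAX h
    · exact h.1.1
  -- closure of V is disjoint from U
  have hVu : V ∩ u = ∅ := by
    apply eq_empty_iff_forall_notMem.mpr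
    rintro x ⟨⟨hxW, hxv⟩, hxu⟩
    exact eq_empty_iff_forall_notMem.mp hdisj x ⟨hxW, hxu, hxv⟩
  have hclV_U : closure V ∩ U = ∅ := by
    apply eq_empty_iff_forall_notMem.mpr
    rintro x ⟨hxcl, hxU⟩
    rcases mem_closure_iff.mp hxcl u hu hxU.2 with ⟨y, hyu, hyV⟩
    exact eq_empty_iff_forall_notMem.mp hVu y ⟨hyV, hyu⟩
  -- key step: any clopen-type splitting of A ∪ U containing A contains everything
  have key : ∀ t₁ t₂ : Set E, IsClosed t₁ → IsClosed t₂ → t₁ ∪ t₂ = A ∪ U →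
      Disjoint t₁ t₂ → A ⊆ t₁ → A ∪ U ⊆ t₁ := by
    intro t₁ t₂ h1 h2 hcov hd hAt
    by_contra hcon
    obtain ⟨x, hxAU, hxt1⟩ := not_subset.mp hcon
    have hxt2 : x ∈ t₂ := by
      have hx12 : x ∈ t₁ ∪ t₂ := by rw [hcov]; exact hxAU
      rcases hx12 with h | h
      · exact absurd h hxt1
      · exact h
    have ht2U : t₂ ⊆ U := by
      intro y hy
      have hyAU : y ∈ A ∪ U := by rw [← hcov]; exact Or.inr hy
      rcases hyAU with h | h
      · exact ((Set.disjoint_left.mp hd (hAt h)) hy).elim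
      · exact h
    -- apply connectedness of X
    have hXpre := hXconn.isPreconnected
    rw [isPreconnected_iff_subset_of_fully_disjoint_closed hXclosed] at hXpre
    have hsplit : X ⊆ (t₁ ∪ closure V) ∪ t₂ := by
      intro y hy
      have : y ∈ A ∪ U ∪ V := hXsplit ▸ hy
      rcases this with h | h
      · have hy12 : y ∈ t₁ ∪ t₂ := by rw [hcov]; exact h
        rcases hy12 with h' | h'
        · exact Or.inl (Or.inl h')
        · exact Or.inr h'
      · exact Or.inl (Or.inr (subset_closure h))
    have hdisj' : Disjoint (t₁ ∪ closure V) t₂ := by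
      rw [disjoint_union_left]
      refine ⟨hd, ?_⟩
      rw [disjoint_iff_inter_eq_empty]
      apply eq_empty_iff_forall_notMem.mpr
      rintro y ⟨hy1, hy2⟩
      exact eq_empty_iff_forall_notMem.mp hclV_U y ⟨hy1, ht2U hy2⟩
    rcases hXpre (t₁ ∪ closure V) t₂ (h1.union isClosed_closure) h2 hsplit hdisj' with h | h
    · have hxX : x ∈ X := hAUX hxAU
      rcases h hxX with h' | h'
      · exact Set.disjoint_left.mp hd h' hxt2
      · have hxU : x ∈ U := ht2U hxt2
        exact eq_empty_iff_forall_notMem.mp hclV_U x ⟨h', hxU⟩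
    · obtain ⟨a, ha⟩ := hAconn.nonempty
      exact Set.disjoint_left.mp hd (hAt ha) (h (hAX ha))
  -- connectedness of A ∪ U
  have hAUconn : IsPreconnected (A ∪ U) := by
    rw [isPreconnected_iff_subset_of_fully_disjoint_closed hAUclosed]
    intro t₁ t₂ h1 h2 hcov hd
    set t₁' := t₁ ∩ (A ∪ U) with ht1'
    set t₂' := t₂ ∩ (A ∪ U) with ht2'
    have h1' : IsClosed t₁' := h1.inter hAUclosed
    have h2' : IsClosed t₂' := h2.inter hAUclosed
    have hcov' : t₁' ∪ t₂' = A ∪ U := by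
      rw [ht1', ht2', ← union_inter_distrib_right]
      exact inter_eq_right.mpr hcov
    have hd' : Disjoint t₁' t₂' := hd.mono inter_subset_left inter_subset_left
    have hApre := hAconn.isPreconnected
    rw [isPreconnected_iff_subset_of_fully_disjoint_closed hAclosed] at hApre
    have hAsub : A ⊆ t₁' ∪ t₂' := hcov' ▸ subset_union_left
    rcases hApre t₁' t₂' h1' h2' hAsub hd' with h | h
    · exact Or.inl ((key t₁' t₂' h1' h2' hcov' hd' h).trans inter_subset_left)
    · exact Or.inr ((key t₂' t₁' h2' h1' (union_comm t₁' t₂' ▸ hcov') hd'.symm h).trans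
        inter_subset_left)
  have hAUne : A ∪ U ≠ X := by
    intro heq
    obtain ⟨y, hyV⟩ := hVne
    have hyX : y ∈ X := hyV.1.1
    have : y ∈ A ∪ U := heq ▸ hyX
    rcases this with h | h
    · exact hyV.1.2 h
    · exact eq_empty_iff_forall_notMem.mp hUVdisj y ⟨h, hyV⟩
  exact ⟨⟨hAUX, hXc.of_isClosed_subset hAUclosed hAUX,
    ⟨hAconn.nonempty.mono subset_union_left, hAUconn⟩⟩, hAUne⟩

/-- In an indecomposable continuum, the complement of a proper subcontinuum is preconnected. -/
lemma compl_preconnected (hXc : IsCompact X) (hXconn : IsConnected X)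
    (hX : IsIndecomposable X) {A : Set E} (hA : IsSubcontinuum X A) (hAne : A ≠ X) :
    IsPreconnected (X \ A) := by
  by_contra hcon
  rw [IsPreconnected] at hcon
  push_neg at hcon
  obtain ⟨u, v, hu, hv, hcover, hune, hvne, hempty⟩ := hcon
  have h1 := piece_lemma hXc hXconn hA hu hv hcover hempty hvne
  have h2 := piece_lemma hXc hXconn hA hv hu (by rwa [union_comm])
    (by rwa [inter_comm v u]) hune
  apply hX
  refine ⟨A ∪ ((X \ A) ∩ u), A ∪ ((X \ A) ∩ v), h1.1, h2.1, h1.2, h2.2, ?_⟩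
  apply Subset.antisymm
  · rintro x ((h | h) | (h | h))
    · exact hA.1 h
    · exact h.1.1
    · exact hA.1 h
    · exact h.1.1
  · intro x hx
    by_cases hxA : x ∈ A
    · exact Or.inl (Or.inl hxA)
    · rcases hcover ⟨hx, hxA⟩ with h | h
      · exact Or.inl (Or.inr ⟨⟨hx, hxA⟩, h⟩)
      · exact Or.inr (Or.inr ⟨⟨hx, hxA⟩, h⟩)

/-- In an indecomposable continuum, a proper subcontinuum has no interior in `X`. -/
lemma no_interior (hXc : IsCompact X) (hXconn : IsConnected X)
    (hX : IsIndecomposable X) {A : Set E} (hA : IsSubcontinuum X A) (hAne : A ≠ X)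
    {v : Set E} (hv : IsOpen v) (hvA : v ∩ X ⊆ A) : v ∩ X = ∅ := by
  by_contra hcon
  obtain ⟨x, hxv, hxX⟩ := nonempty_iff_ne_empty.mpr hcon
  have hWpre := compl_preconnected hXc hXconn hX hA hAne
  have hWne : (X \ A).Nonempty :=
    diff_nonempty.mpr (fun hsub => hAne (Subset.antisymm hA.1 hsub))
  set C := closure (X \ A) with hC
  have hCX : C ⊆ X := closure_minimal diff_subset hXc.isClosed
  have hCcomp : IsCompact C := hXc.of_isClosed_subset isClosed_closure hCX
  have hCconn : IsConnected C := ⟨hWne.mono subset_closure, hWpre.closure⟩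
  have hvW : v ∩ (X \ A) = ∅ := by
    apply eq_empty_iff_forall_notMem.mpr
    rintro y ⟨hyv, hyW⟩
    exact hyW.2 (hvA ⟨hyv, hyW.1⟩)
  have hxC : x ∉ C := by
    intro hxC
    rcases mem_closure_iff.mp hxC v hv hxv with ⟨y, hyv, hyW⟩
    exact eq_empty_iff_forall_notMem.mp hvW y ⟨hyv, hyW⟩
  have hCne : C ≠ X := fun h => hxC (h ▸ hxX)
  apply hX
  refine ⟨A, C, hA, ⟨hCX, hCcomp, hCconn⟩, hAne, hCne, ?_⟩
  apply Subset.antisymm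
  · rintro y (h | h)
    · exact hA.1 h
    · exact hCX h
  · intro y hy
    by_cases hyA : y ∈ A
    · exact Or.inl hyA
    · exact Or.inr (subset_closure ⟨hy, hyA⟩)

end Aux

theorem composant_proper_and_meager
    {E : Type*} [MetricSpace E] (X : Set E)
    (hXc : IsCompact X) (hXconn : IsConnected X)
    (hnd : X.Nontrivial) (hX : IsIndecomposable X)
    (p : E) (hp : p ∈ X) :
    Composant X p ⊂ X ∧ IsMeagre (Subtype.val ⁻¹' (Composant X p) : Set X) := by
  haveI : CompactSpace X := isCompact_iff_compactSpace.mp hXc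
  haveI : Nonempty X := ⟨⟨p, hp⟩⟩
  obtain ⟨𝒮, h𝒮count, h𝒮empty, h𝒮basis⟩ := exists_countable_basis ↥X
  -- the union of all proper subcontinua containing p and avoiding U
  set J : Set ↥X → Set E := fun U =>
    ⋃₀ {A : Set E | IsSubcontinuum X A ∧ A ≠ X ∧ p ∈ A ∧ ∀ z : ↥X, z ∈ U → z.val ∉ A}
    with hJ
  set F : Set ↥X → Set ↥X := fun U => Subtype.val ⁻¹' closure (J U) with hF
  have hmeagre : IsMeagre (Subtype.val ⁻¹' (Composant X p) : Set X) := by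
    rw [isMeagre_iff_countable_union_isNowhereDense]
    refine ⟨F '' 𝒮, ?_, h𝒮count.image F, ?_⟩
    · rintro t ⟨U, hU𝒮, rfl⟩
      have hUne : U.Nonempty := nonempty_iff_ne_empty.mpr (fun h => h𝒮empty (h ▸ hU𝒮))
      have hUopen : IsOpen U := h𝒮basis.isOpen hU𝒮
      obtain ⟨w, hw, hUw⟩ := isOpen_induced_iff.mp hUopen
      -- closure (J U) avoids w ∩ X, so it is not all of X
      have hJw : J U ∩ w = ∅ := by
        apply eq_empty_iff_forall_notMem.mpr
        rintro y ⟨⟨A, ⟨hAsub, hAne, hpA, hAU⟩, hyA⟩, hyw⟩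
        have hyX : y ∈ X := hAsub.1 hyA
        exact hAU ⟨y, hyX⟩ (by rw [← hUw]; exact hyw) hyA
      have hclJw : closure (J U) ∩ w = ∅ := by
        apply eq_empty_iff_forall_notMem.mpr
        rintro y ⟨hycl, hyw⟩
        rcases mem_closure_iff.mp hycl w hw hyw with ⟨z, hzw, hzJ⟩
        exact eq_empty_iff_forall_notMem.mp hJw z ⟨hzJ, hzw⟩
      -- F U is closed
      have hFclosed : IsClosed (F U) := isClosed_closure.preimage continuous_subtype_val
      show IsNowhereDense (F U)
      rw [IsNowhereDense, hFclosed.closure_eq]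
      -- show interior is empty
      by_contra hcon
      obtain ⟨x, hxint⟩ := nonempty_iff_ne_empty.mpr hcon
      have hmem : F U ∈ nhds x := mem_interior_iff_mem_nhds.mp hxint
      rw [hF, nhds_induced, Filter.mem_comap] at hmem
      obtain ⟨t', ht'nhds, ht'sub⟩ := hmem
      obtain ⟨v, hvsub, hvopen, hxv⟩ := mem_nhds_iff.mp ht'nhds
      have hvX : v ∩ X ⊆ closure (J U) := by
        rintro y ⟨hyv, hyX⟩
        exact ht'sub (hvsub hyv : (⟨y, hyX⟩ : ↥X).val ∈ t')
      have hvXne : (v ∩ X).Nonempty := ⟨x.val, hxv, x.2⟩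
      -- J U must be nonempty
      rcases eq_empty_or_nonempty (J U) with hJe | hJne
      · rw [hJe, closure_empty] at hvX
        exact absurd (hvX hvXne.choose_spec) (notMem_empty _)
      -- closure (J U) is a proper subcontinuum
      have hJX : J U ⊆ X := by
        rintro y ⟨A, ⟨hAsub, _⟩, hyA⟩
        exact hAsub.1 hyA
      have hCX : closure (J U) ⊆ X := closure_minimal hJX hXc.isClosed
      have hJpre : IsPreconnected (J U) := by
        apply isPreconnected_sUnion p
        · rintro A ⟨_, _, hpA, _⟩; exact hpA
        · rintro A ⟨hAsub, _⟩; exact hAsub.2.2.isPreconnected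
      have hCsub : IsSubcontinuum X (closure (J U)) :=
        ⟨hCX, hXc.of_isClosed_subset isClosed_closure hCX,
          ⟨hJne.mono subset_closure, hJpre.closure⟩⟩
      have hCne : closure (J U) ≠ X := by
        intro h
        obtain ⟨z, hzU⟩ := hUne
        have hzw : z.val ∈ w := by rw [← hUw] at hzU; exact hzU
        have hzC : z.val ∈ closure (J U) := by rw [h]; exact z.2
        exact eq_empty_iff_forall_notMem.mp hclJw z.val ⟨hzC, hzw⟩
      have := no_interior hXc hXconn hX hCsub hCne hvopen hvX
      rw [this] at hvXne
      exact absurd hvXne Set.not_nonempty_empty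
    · -- Composant is covered by the F U's
      rintro x ⟨A, ⟨hAsub, hAne, hpA⟩, hxA⟩
      -- find a basis element in the complement of A
      have hAclosed : IsClosed (Subtype.val ⁻¹' A : Set ↥X) :=
        hAsub.2.1.isClosed.preimage continuous_subtype_val
      obtain ⟨q, hqX, hqA⟩ : ∃ q ∈ X, q ∉ A := by
        by_contra h
        push_neg at h
        exact hAne (Subset.antisymm hAsub.1 h)
      have hqmem : (⟨q, hqX⟩ : ↥X) ∈ (Subtype.val ⁻¹' A : Set ↥X)ᶜ := hqA
      obtain ⟨U, hU𝒮, hqU, hUsub⟩ :=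
        h𝒮basis.exists_subset_of_mem_open hqmem hAclosed.isOpen_compl
      refine mem_sUnion.mpr ⟨F U, ⟨U, hU𝒮, rfl⟩, ?_⟩
      have : x.val ∈ J U := ⟨A, ⟨hAsub, hAne, hpA, fun z hz hza => hUsub hz hza⟩, hxA⟩
      exact subset_closure this
  refine ⟨?_, hmeagre⟩
  have hCsubX : Composant X p ⊆ X := by
    rintro x ⟨A, ⟨hAsub, _⟩, hxA⟩
    exact hAsub.1 hxA
  refine ssubset_iff_subset_ne.mpr ⟨hCsubX, fun heq => ?_⟩
  have huniv : (Subtype.val ⁻¹' (Composant X p) : Set X) = univ := by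
    rw [heq]; exact Subtype.coe_preimage_self X
  rw [huniv] at hmeagre
  have hdense : Dense ((univ : Set ↥X)ᶜ) := dense_of_mem_residual hmeagre
  rw [compl_univ] at hdense
  exact absurd hdense.nonempty Set.not_nonempty_empty
end

section
/- A nondegenerate indecomposable continuum has uncountably many pairwise disjoint composants. -/
open Set Metric TopologicalSpace

section Aux

variable {E : Type*} [MetricSpace E] {X : Set E}

/-- Components of a closed set are closed. -/
lemma isClosed_connectedComponentIn' {F : Set E} (hF : IsClosed F) (x : E) :
    IsClosed (connectedComponentIn F x) := by
  by_cases hx : x ∈ F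
  · refine isClosed_of_closure_subset ?_
    exact IsPreconnected.subset_connectedComponentIn
      (isPreconnected_connectedComponentIn.closure)
      (subset_closure (mem_connectedComponentIn hx))
      ((closure_mono (connectedComponentIn_subset F x)).trans hF.closure_eq.subset)
  · rw [connectedComponentIn_eq_empty hx]
    exact isClosed_empty

/-- The union of two intersecting proper subcontinua of an indecomposable continuum is a
proper subcontinuum. -/
lemma union_proper (hX : IsIndecomposable X) {A B : Set E}
    (hA : IsSubcontinuum X A) (hB : IsSubcontinuum X B)
    (hAne : A ≠ X) (hBne : B ≠ X) (hmeet : (A ∩ B).Nonempty) :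
    IsSubcontinuum X (A ∪ B) ∧ A ∪ B ≠ X := by
  refine ⟨⟨union_subset hA.1 hB.1, hA.2.1.union hB.2.1,
    IsConnected.union hmeet hA.2.2 hB.2.2⟩, fun h => hX ⟨A, B, hA, hB, hAne, hBne, h⟩⟩

/-- Composants of an indecomposable continuum that meet are equal. -/
lemma composant_subset_of_meet (hX : IsIndecomposable X) (p q : E)
    (h : (Composant X p ∩ Composant X q).Nonempty) :
    Composant X p ⊆ Composant X q := by
  obtain ⟨x, hxp, hxq⟩ := h
  obtain ⟨A, ⟨hA, hAne, hpA⟩, hxA⟩ := hxp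
  obtain ⟨B, ⟨hB, hBne, hqB⟩, hxB⟩ := hxq
  intro y hy
  obtain ⟨A', ⟨hA', hA'ne, hpA'⟩, hyA'⟩ := hy
  obtain ⟨hM1, hM1ne⟩ := union_proper hX hA' hA hA'ne hAne ⟨p, hpA', hpA⟩
  obtain ⟨hM, hMne⟩ := union_proper hX hM1 hB hM1ne hBne ⟨x, Or.inr hxA, hxB⟩
  exact ⟨A' ∪ A ∪ B, ⟨hM, hMne, Or.inr hqB⟩, Or.inl (Or.inl hyA')⟩

/-- One branch of the separation argument: if `A ∪ P` is separated by opens `S, T` with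
`A ⊆ S`, then the `T`-part is empty. -/
lemma sep_branch (hXc : IsCompact X) (hXconn : IsConnected X)
    {A U V S T : Set E} (hAX : A ⊆ X) (hAcl : IsClosed A) (hAne : A.Nonempty)
    (hU : IsOpen U) (hV : IsOpen V)
    (hcovUV : X \ A ⊆ U ∪ V) (hdisUV : (X \ A) ∩ (U ∩ V) = ∅)
    (hS : IsOpen S) (hT : IsOpen T)
    (hcovST : A ∪ (X \ A) ∩ U ⊆ S ∪ T)
    (hdisST : (A ∪ (X \ A) ∩ U) ∩ (S ∩ T) = ∅)
    (hAS : A ⊆ S) :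
    (A ∪ (X \ A) ∩ U) ∩ T = ∅ := by
  set P : Set E := (X \ A) ∩ U with hP
  set W : Set E := (A ∪ P) ∩ T with hWdef
  -- W = X ∩ (T ∩ U ∩ Aᶜ)
  have hW_eq : W = X ∩ (T ∩ U ∩ Aᶜ) := by
    apply Set.eq_of_subset_of_subset
    · rintro w ⟨hw1, hw2⟩
      have hwP : w ∈ P := by
        rcases hw1 with h | h
        · exfalso
          have : w ∈ (A ∪ P) ∩ (S ∩ T) := ⟨Or.inl h, hAS h, hw2⟩
          rw [hdisST] at this; exact this
        · exact h
      exact ⟨hwP.1.1, ⟨hw2, hwP.2⟩, hwP.1.2⟩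
    · rintro w ⟨hwX, ⟨hwT, hwU⟩, hwA⟩
      exact ⟨Or.inr ⟨⟨hwX, hwA⟩, hwU⟩, hwT⟩
  -- W is closed in E
  have hW_closed : IsClosed W := by
    have hAP_eq : A ∪ P = X ∩ (A ∪ Vᶜ) := by
      apply Set.eq_of_subset_of_subset
      · rintro w (h | h)
        · exact ⟨hAX h, Or.inl h⟩
        · refine ⟨h.1.1, Or.inr fun hwV => ?_⟩
          have : w ∈ (X \ A) ∩ (U ∩ V) := ⟨h.1, h.2, hwV⟩
          rw [hdisUV] at this; exact this
      · rintro w ⟨hwX, h⟩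
        by_cases hwA : w ∈ A
        · exact Or.inl hwA
        · rcases hcovUV ⟨hwX, hwA⟩ with hU' | hV'
          · exact Or.inr ⟨⟨hwX, hwA⟩, hU'⟩
          · rcases h with h | h
            · exact Or.inl h
            · exact absurd hV' h
    have hAP_closed : IsClosed (A ∪ P) := by
      rw [hAP_eq]
      exact hXc.isClosed.inter (hAcl.union hV.isClosed_compl)
    have hW_eq2 : W = (A ∪ P) ∩ Sᶜ := by
      apply Set.eq_of_subset_of_subset
      · rintro w ⟨hw1, hw2⟩
        refine ⟨hw1, fun hwS => ?_⟩
        have : w ∈ (A ∪ P) ∩ (S ∩ T) := ⟨hw1, hwS, hw2⟩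
        rw [hdisST] at this; exact this
      · rintro w ⟨hw1, hw2⟩
        rcases hcovST hw1 with h | h
        · exact absurd h hw2
        · exact ⟨hw1, h⟩
    rw [hW_eq2]
    exact hAP_closed.inter (isClosed_compl_iff.mpr hS)
  -- Use connectedness of X : the clopen (rel X) set W must be empty
  by_contra hWne
  have hWne' : W.Nonempty := nonempty_iff_ne_empty.mpr hWne
  have hO : IsOpen (T ∩ U ∩ Aᶜ) := (hT.inter hU).inter hAcl.isOpen_compl
  have hpre := hXconn.isPreconnected
  have hcover : X ⊆ (T ∩ U ∩ Aᶜ) ∪ Wᶜ := by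
    intro x hx
    by_cases hxW : x ∈ W
    · rw [hW_eq] at hxW; exact Or.inl hxW.2
    · exact Or.inr hxW
  have h1 : (X ∩ (T ∩ U ∩ Aᶜ)).Nonempty := by rw [← hW_eq]; exact hWne'
  have h2 : (X ∩ Wᶜ).Nonempty := by
    obtain ⟨a, ha⟩ := hAne
    refine ⟨a, hAX ha, fun haW => ?_⟩
    rw [hW_eq] at haW
    exact haW.2.2 ha
  have h3 := hpre (T ∩ U ∩ Aᶜ) Wᶜ hO hW_closed.isOpen_compl hcover h1 h2
  obtain ⟨z, hzX, hz1, hz2⟩ := h3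
  exact hz2 (hW_eq ▸ ⟨hzX, hz1⟩)

/-- `A` together with one piece of a separation of `X \ A` is a subcontinuum. -/
lemma union_piece_subcontinuum (hXc : IsCompact X) (hXconn : IsConnected X)
    {A U V : Set E} (hAX : A ⊆ X) (hAcp : IsCompact A) (hAconn : IsConnected A)
    (hU : IsOpen U) (hV : IsOpen V) (hcov : X \ A ⊆ U ∪ V)
    (hdis : (X \ A) ∩ (U ∩ V) = ∅) :
    IsSubcontinuum X (A ∪ (X \ A) ∩ U) := by
  have hsub : A ∪ (X \ A) ∩ U ⊆ X := by
    rintro w (h | h)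
    · exact hAX h
    · exact h.1.1
  have hAP_eq : A ∪ (X \ A) ∩ U = X ∩ (A ∪ Vᶜ) := by
    apply Set.eq_of_subset_of_subset
    · rintro w (h | h)
      · exact ⟨hAX h, Or.inl h⟩
      · refine ⟨h.1.1, Or.inr fun hwV => ?_⟩
        have : w ∈ (X \ A) ∩ (U ∩ V) := ⟨h.1, h.2, hwV⟩
        rw [hdis] at this; exact this
    · rintro w ⟨hwX, h⟩
      by_cases hwA : w ∈ A
      · exact Or.inl hwA
      · rcases hcov ⟨hwX, hwA⟩ with hU' | hV'
        · exact Or.inr ⟨⟨hwX, hwA⟩, hU'⟩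
        · rcases h with h | h
          · exact Or.inl h
          · exact absurd hV' h
  have hclosed : IsClosed (A ∪ (X \ A) ∩ U) := by
    rw [hAP_eq]
    exact hXc.isClosed.inter (hAcp.isClosed.union hV.isClosed_compl)
  refine ⟨hsub, hXc.of_isClosed_subset hclosed hsub, ?_⟩
  refine ⟨hAconn.nonempty.mono subset_union_left, ?_⟩
  intro S T hS hT hcovST hneS hneT
  by_contra hcon
  have hdisST : (A ∪ (X \ A) ∩ U) ∩ (S ∩ T) = ∅ :=
    not_nonempty_iff_eq_empty.mp hcon
  have hAor : A ⊆ S ∨ A ⊆ T := by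
    by_cases h1 : (A ∩ S).Nonempty
    · by_cases h2 : (A ∩ T).Nonempty
      · exfalso
        obtain ⟨z, hz⟩ := hAconn.isPreconnected S T hS hT
          (fun x hx => hcovST (Or.inl hx)) h1 h2
        have : z ∈ (A ∪ (X \ A) ∩ U) ∩ (S ∩ T) := ⟨Or.inl hz.1, hz.2⟩
        rw [hdisST] at this; exact this
      · left
        intro a ha
        rcases hcovST (Or.inl ha) with h | h
        · exact h
        · exact absurd (⟨a, ha, h⟩ : (A ∩ T).Nonempty) h2
    · right
      intro a ha
      rcases hcovST (Or.inl ha) with h | h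
      · exact absurd (⟨a, ha, h⟩ : (A ∩ S).Nonempty) h1
      · exact h
  rcases hAor with hAS | hAT
  · have := sep_branch hXc hXconn hAX hAcp.isClosed hAconn.nonempty hU hV hcov hdis
      hS hT hcovST hdisST hAS
    obtain ⟨t, ht⟩ := hneT
    rw [this] at ht; exact ht
  · have hdisST' : (A ∪ (X \ A) ∩ U) ∩ (T ∩ S) = ∅ := by
      rw [inter_comm T S]; exact hdisST
    have hcovST' : A ∪ (X \ A) ∩ U ⊆ T ∪ S := by
      rw [union_comm T S]; exact hcovST
    have := sep_branch hXc hXconn hAX hAcp.isClosed hAconn.nonempty hU hV hcov hdis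
      hT hS hcovST' hdisST' hAT
    obtain ⟨t, ht⟩ := hneS
    rw [this] at ht; exact ht

/-- A proper subcontinuum with nonempty relative interior makes `X` decomposable. -/
lemma decomposable_of_interior (hXc : IsCompact X) (hXconn : IsConnected X)
    {A V : Set E} (hA : IsSubcontinuum X A) (hAne : A ≠ X) (hV : IsOpen V)
    (hVX : V ∩ X ⊆ A) (hne : (V ∩ X).Nonempty) : ¬ IsIndecomposable X := by
  intro hX
  obtain ⟨hAX, hAcp, hAconn⟩ := hA
  have hdiff_ne : (X \ A).Nonempty := by
    rcases Set.exists_of_ssubset (hAX.ssubset_of_ne hAne) with ⟨x, hx1, hx2⟩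
    exact ⟨x, hx1, hx2⟩
  by_cases hpre : IsPreconnected (X \ A)
  · -- X = A ∪ closure (X \ A)
    set B := closure (X \ A) with hB
    have hBX : B ⊆ X :=
      (closure_mono diff_subset).trans (le_of_eq hXc.isClosed.closure_eq)
    have hBsub : IsSubcontinuum X B :=
      ⟨hBX, hXc.of_isClosed_subset isClosed_closure hBX,
        (IsConnected.closure ⟨hdiff_ne, hpre⟩)⟩
    have hBne : B ≠ X := by
      obtain ⟨v, hvV, hvX⟩ := hne
      intro hBX'
      have hvB : v ∈ closure (X \ A) := by
        have hv2 : v ∈ B := by rw [hBX']; exact hvX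
        rwa [hB] at hv2
      obtain ⟨ε, hε, hball⟩ := Metric.isOpen_iff.mp hV v hvV
      obtain ⟨b, hb, hbd⟩ := Metric.mem_closure_iff.mp hvB ε hε
      exact hb.2 (hVX ⟨hball (mem_ball'.mpr hbd), hb.1⟩)
    have huni : A ∪ B = X := by
      apply Set.eq_of_subset_of_subset (union_subset hAX hBX)
      intro x hx
      by_cases hxA : x ∈ A
      · exact Or.inl hxA
      · exact Or.inr (subset_closure ⟨hx, hxA⟩)
    exact hX ⟨A, B, ⟨hAX, hAcp, hAconn⟩, hBsub, hAne, hBne, huni⟩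
  · rw [IsPreconnected] at hpre
    push_neg at hpre
    obtain ⟨U, V', hU, hV', hcov, hneU, hneV', hdis'⟩ := hpre
    have hdis : (X \ A) ∩ (U ∩ V') = ∅ := hdis'
    have hP := union_piece_subcontinuum hXc hXconn hAX hAcp hAconn hU hV' hcov hdis
    have hdis2 : (X \ A) ∩ (V' ∩ U) = ∅ := by rw [inter_comm V' U]; exact hdis
    have hcov2 : X \ A ⊆ V' ∪ U := by rw [union_comm V' U]; exact hcov
    have hQ := union_piece_subcontinuum hXc hXconn hAX hAcp hAconn hV' hU hcov2 hdis2
    have hPQdis : ((X \ A) ∩ U) ∩ ((X \ A) ∩ V') = ∅ := by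
      rw [← Set.not_nonempty_iff_eq_empty]
      rintro ⟨z, ⟨hz1, hz2⟩, ⟨hz3, hz4⟩⟩
      have : z ∈ (X \ A) ∩ (U ∩ V') := ⟨hz1, hz2, hz4⟩
      rw [hdis] at this; exact this
    have hPne : A ∪ (X \ A) ∩ U ≠ X := by
      obtain ⟨q, hq⟩ := hneV'
      intro hcontra
      have hqmem : q ∈ A ∪ (X \ A) ∩ U := by rw [hcontra]; exact hq.1.1
      rcases hqmem with h | h
      · exact hq.1.2 h
      · have : q ∈ ((X \ A) ∩ U) ∩ ((X \ A) ∩ V') := ⟨h, hq⟩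
        rw [hPQdis] at this; exact this
    have hQne : A ∪ (X \ A) ∩ V' ≠ X := by
      obtain ⟨q, hq⟩ := hneU
      intro hcontra
      have hqmem : q ∈ A ∪ (X \ A) ∩ V' := by rw [hcontra]; exact hq.1.1
      rcases hqmem with h | h
      · exact hq.1.2 h
      · have : q ∈ ((X \ A) ∩ U) ∩ ((X \ A) ∩ V') := ⟨hq, h⟩
        rw [hPQdis] at this; exact this
    have huni : (A ∪ (X \ A) ∩ U) ∪ (A ∪ (X \ A) ∩ V') = X := by
      apply Set.eq_of_subset_of_subset
      · apply union_subset hP.1 hQ.1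
      · intro x hx
        by_cases hxA : x ∈ A
        · exact Or.inl (Or.inl hxA)
        · rcases hcov ⟨hx, hxA⟩ with h | h
          · exact Or.inl (Or.inr ⟨⟨hx, hxA⟩, h⟩)
          · exact Or.inr (Or.inr ⟨⟨hx, hxA⟩, h⟩)
    exact hX ⟨_, _, hP, hQ, hPne, hQne, huni⟩

/-- In an indecomposable continuum, proper subcontinua have empty relative interior. -/
lemma relint_empty (hXc : IsCompact X) (hXconn : IsConnected X)
    (hX : IsIndecomposable X) {A : Set E}
    (hA : IsSubcontinuum X A) (hAne : A ≠ X) {V : Set E} (hV : IsOpen V)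
    (hVX : V ∩ X ⊆ A) : V ∩ X = ∅ := by
  by_contra h
  exact decomposable_of_interior hXc hXconn hA hAne hV hVX
    (nonempty_iff_ne_empty.mpr h) hX


/-- Every point of a nondegenerate `X` lies in its own composant. -/
lemma mem_composant_self (hnd : X.Nontrivial) {p : E} (hp : p ∈ X) :
    p ∈ Composant X p := by
  refine ⟨{p}, ⟨⟨singleton_subset_iff.mpr hp, isCompact_singleton, isConnected_singleton⟩,
    ?_, rfl⟩, rfl⟩
  intro h
  obtain ⟨a, ha, b, hb, hab⟩ := hnd
  rw [← h] at ha hb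
  exact hab (ha.trans hb.symm)

/-- Every point of a composant lies in a component of the complement of a small ball
centered at a point of a countable dense set. -/
lemma composant_covered (hXc : IsCompact X) {c : Set E} (hdense : X ⊆ closure c)
    {p z : E} (hz : z ∈ Composant X p) :
    ∃ d ∈ c, ∃ n : ℕ, (ball d (1 / (n + 1)) ∩ X).Nonempty ∧
      z ∈ connectedComponentIn (X \ ball d (1 / (n + 1))) p := by
  obtain ⟨A, ⟨⟨hAX, hAcp, hAconn⟩, hAne, hpA⟩, hzA⟩ := hz
  have hdiff : (X \ A).Nonempty := by
    rcases Set.exists_of_ssubset (hAX.ssubset_of_ne hAne) with ⟨x, hx1, hx2⟩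
    exact ⟨x, hx1, hx2⟩
  obtain ⟨x, hxX, hxA⟩ := hdiff
  have hpos : 0 < infDist x A :=
    (hAcp.isClosed.notMem_iff_infDist_pos hAconn.nonempty).mp hxA
  obtain ⟨n, hn⟩ := exists_nat_one_div_lt (half_pos hpos)
  have hrpos : (0 : ℝ) < 1 / (n + 1) := by positivity
  obtain ⟨d, hdc, hdd⟩ := Metric.mem_closure_iff.mp (hdense hxX) _ hrpos
  refine ⟨d, hdc, n, ⟨x, mem_ball.mpr hdd, hxX⟩, ?_⟩
  have hAF : A ⊆ X \ ball d (1 / (n + 1)) := by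
    intro a ha
    refine ⟨hAX ha, fun hball => ?_⟩
    have h1 : dist x a ≤ dist x d + dist d a := dist_triangle x d a
    have h2 : dist d a < 1 / (n + 1) := mem_ball'.mp hball
    have h3 : dist x a < 1 / (n + 1) + 1 / (n + 1) := by
      calc dist x a ≤ dist x d + dist d a := h1
        _ < 1 / (n + 1) + 1 / (n + 1) := add_lt_add hdd h2
    have h4 : infDist x A ≤ dist x a := infDist_le_dist_of_mem ha
    linarith
  exact hAconn.isPreconnected.subset_connectedComponentIn hpA hAF hzA

end Aux

theorem uncountably_many_disjoint_composants
    {E : Type*} [MetricSpace E] (X : Set E)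
    (hXc : IsCompact X) (hXconn : IsConnected X)
    (hnd : X.Nontrivial) (hX : IsIndecomposable X) :
    ∃ S : Set (Set E),
      (∀ C ∈ S, ∃ p ∈ X, C = Composant X p) ∧
      (∀ C ∈ S, ∀ D ∈ S, C ≠ D → C ∩ D = ∅) ∧
      ¬ S.Countable := by
  classical
  refine ⟨(Composant X) '' X, ?_, ?_, ?_⟩
  · rintro C ⟨p, hp, rfl⟩
    exact ⟨p, hp, rfl⟩
  · rintro C ⟨p, hp, rfl⟩ D ⟨q, hq, rfl⟩ hne
    by_contra h
    have hmeet : (Composant X p ∩ Composant X q).Nonempty :=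
      nonempty_iff_ne_empty.mpr h
    have hmeet' : (Composant X q ∩ Composant X p).Nonempty := by
      rwa [inter_comm] at hmeet
    exact hne (subset_antisymm (composant_subset_of_meet hX p q hmeet)
      (composant_subset_of_meet hX q p hmeet'))
  · intro hScnt
    -- countable dense subset of X
    obtain ⟨c, hc_cnt, hc_dense⟩ := hXc.isSeparable
    -- index of admissible balls
    set T : Set (E × ℕ) :=
      {dn | dn.1 ∈ c ∧ (ball dn.1 (1 / (dn.2 + 1)) ∩ X).Nonempty} with hT
    have hT_cnt : T.Countable := by
      refine (hc_cnt.prod countable_univ).mono ?_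
      rintro ⟨d, n⟩ hdn
      exact ⟨hdn.1, trivial⟩
    -- choose a representative point for each composant
    set S : Set (Set E) := (Composant X) '' X with hSdef
    have hrep : ∀ C : S, ∃ p, p ∈ X ∧ (C : Set E) = Composant X p := by
      rintro ⟨C, p, hp, rfl⟩
      exact ⟨p, hp, rfl⟩
    choose pt hptX hptC using hrep
    -- the Baire space X
    haveI : CompactSpace X := isCompact_iff_compactSpace.mp hXc
    haveI : Nonempty X := hnd.nonempty.to_subtype
    haveI : Countable S := hScnt.to_subtype
    haveI : Countable T := hT_cnt.to_subtype
    set f : S × T → Set X := fun i =>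
      Subtype.val ⁻¹' (connectedComponentIn
        (X \ ball (i.2 : E × ℕ).1 (1 / ((i.2 : E × ℕ).2 + 1))) (pt i.1)) with hf
    have hFclosed : ∀ (d : E) (n : ℕ), IsClosed (X \ ball d (1 / (n + 1))) :=
      fun d n => hXc.isClosed.sdiff isOpen_ball
    have hclosed : ∀ i, IsClosed (f i) := fun i =>
      (isClosed_connectedComponentIn' (hFclosed _ _) _).preimage continuous_subtype_val
    have hcover : ⋃ i, f i = univ := by
      rw [eq_univ_iff_forall]
      intro z
      have hzX : (z : E) ∈ X := z.2
      have hzS : Composant X (z : E) ∈ S := ⟨z, hzX, rfl⟩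
      have hzC : (z : E) ∈ (⟨Composant X (z : E), hzS⟩ : S).1 :=
        mem_composant_self hnd hzX
      rw [hptC ⟨Composant X (z : E), hzS⟩] at hzC
      obtain ⟨d, hdc, n, hball_ne, hmem⟩ := composant_covered hXc hc_dense hzC
      refine mem_iUnion.mpr ⟨⟨⟨Composant X (z : E), hzS⟩, ⟨(d, n), hdc, hball_ne⟩⟩, ?_⟩
      exact hmem
    obtain ⟨i, w, hw⟩ := nonempty_interior_of_iUnion_of_closed hclosed hcover
    -- unpack the interior point
    set d : E := (i.2 : E × ℕ).1
    set n : ℕ := (i.2 : E × ℕ).2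
    set K : Set E := connectedComponentIn (X \ ball d (1 / (n + 1))) (pt i.1) with hK
    have hfi : f i = Subtype.val ⁻¹' K := rfl
    have hw_nhds : f i ∈ nhds w := mem_interior_iff_mem_nhds.mp hw
    rw [hfi] at hw_nhds
    obtain ⟨u, hu_nhds, hu_sub⟩ := (mem_nhds_subtype X w _).mp hw_nhds
    obtain ⟨V, hVu, hVopen, hwV⟩ := _root_.mem_nhds_iff.mp hu_nhds
    have hVXK : V ∩ X ⊆ K := by
      rintro x ⟨hxV, hxX⟩
      exact hu_sub (show (⟨x, hxX⟩ : X) ∈ Subtype.val ⁻¹' u from hVu hxV)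
    have hwfi : w ∈ f i := interior_subset hw
    have hwK : (w : E) ∈ K := hwfi
    have hKne : K.Nonempty := ⟨_, hwK⟩
    have hptF : pt i.1 ∈ X \ ball d (1 / (n + 1)) :=
      connectedComponentIn_nonempty_iff.mp hKne
    have hKsub : IsSubcontinuum X K := by
      have hKX : K ⊆ X := (connectedComponentIn_subset _ _).trans diff_subset
      exact ⟨hKX, hXc.of_isClosed_subset (isClosed_connectedComponentIn' (hFclosed d n) _) hKX,
        ⟨hKne, isPreconnected_connectedComponentIn⟩⟩
    have hKneX : K ≠ X := by
      obtain ⟨y, hy_ball, hy_X⟩ := i.2.2.2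
      intro hKX
      have hyK : y ∈ K := by rw [hKX]; exact hy_X
      exact ((connectedComponentIn_subset _ _) hyK).2 hy_ball
    have hempty := relint_empty hXc hXconn hX hKsub hKneX hVopen hVXK
    rw [eq_empty_iff_forall_notMem] at hempty
    exact hempty (w : E) ⟨hwV, w.2⟩
end

section
/- Let X be a nondegenerate indecomposable continuum, let p ∈ X, and let B be an open ball of positive radius around p. Then for any point q in a composant of X different from the composant of p, the connected component Q of X \ B containing q converges to X as the radius tends to 0; more precisely, for each open set V meeting X there is r > 0 such that for all radii less than r the component of X \ B_r(p) containing q meets V. -/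
open Set Metric

/-- Boundary bumping: the component of `q` in `X \ W` meets `closure W`. -/
theorem bb_aux {E : Type*} [MetricSpace E] {X W : Set E}
    (hXc : IsCompact X) (hXconn : IsConnected X)
    (hW : IsOpen W) (hWX : (W ∩ X).Nonempty) {q : E} (hq : q ∈ X \ W) :
    (connectedComponentIn (X \ W) q ∩ closure W).Nonempty := by
  set S := X \ W with hS
  have hSc : IsCompact S := hXc.diff hW
  haveI : CompactSpace S := isCompact_iff_compactSpace.mp hSc
  set q₀ : S := ⟨q, hq⟩
  set B' : Set S := Subtype.val ⁻¹' closure W with hB'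
  have hB'closed : IsClosed B' := isClosed_closure.preimage continuous_subtype_val
  -- it suffices to find a point in `connectedComponent q₀ ∩ B'`
  suffices h : (connectedComponent q₀ ∩ B').Nonempty by
    obtain ⟨z, hz1, hz2⟩ := h
    refine ⟨z, ?_, hz2⟩
    rw [connectedComponentIn_eq_image hq]
    exact mem_image_of_mem _ hz1
  by_contra hcon
  rw [Set.not_nonempty_iff_eq_empty] at hcon
  -- find a clopen set `Z ∋ q₀` with `Z ∩ B' = ∅`
  have hcc := connectedComponent_eq_iInter_isClopen q₀
  have hZ : ∃ Z : { s : Set S // IsClopen s ∧ q₀ ∈ s }, (Z.1 ∩ B') = ∅ := by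
    by_contra hall
    push_neg at hall
    have hne : ∀ Z : { s : Set S // IsClopen s ∧ q₀ ∈ s }, (Z.1 ∩ B').Nonempty := hall
    haveI : Nonempty { s : Set S // IsClopen s ∧ q₀ ∈ s } :=
      ⟨⟨Set.univ, isClopen_univ, mem_univ _⟩⟩
    have hdir : Directed (· ⊇ ·) fun Z : { s : Set S // IsClopen s ∧ q₀ ∈ s } => Z.1 ∩ B' := by
      rintro Z₁ Z₂
      refine ⟨⟨Z₁.1 ∩ Z₂.1, Z₁.2.1.inter Z₂.2.1, ⟨Z₁.2.2, Z₂.2.2⟩⟩, ?_, ?_⟩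
      · exact fun x hx => ⟨hx.1.1, hx.2⟩
      · exact fun x hx => ⟨hx.1.2, hx.2⟩
    have := IsCompact.nonempty_iInter_of_directed_nonempty_isCompact_isClosed _ hdir hne
      (fun Z => ((Z.2.1.1.inter hB'closed).isCompact))
      (fun Z => Z.2.1.1.inter hB'closed)
    rw [← Set.iInter_inter, ← hcc, hcon] at this
    exact this.ne_empty rfl
  obtain ⟨Z, hZB⟩ := hZ
  -- push `Z` down to a set `K ⊆ E`
  set K : Set E := Subtype.val '' Z.1 with hK
  have hKc : IsCompact K := (Z.2.1.1.isCompact).image continuous_subtype_val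
  have hKclW : K ∩ closure W = ∅ := by
    ext x
    simp only [mem_inter_iff, mem_empty_iff_false, iff_false]
    rintro ⟨⟨z, hzZ, rfl⟩, hxW⟩
    exact absurd (Set.mem_inter hzZ hxW) (by rw [hZB]; exact id)
  obtain ⟨O, hOopen, hOZ⟩ := isOpen_induced_iff.mp Z.2.1.2
  -- derive a contradiction with connectedness of X
  have hU : IsOpen (O ∩ (closure W)ᶜ) := hOopen.inter isClosed_closure.isOpen_compl
  have hXU : X ∩ (O ∩ (closure W)ᶜ) ⊆ K := by
    rintro x ⟨hxX, hxO, hxW⟩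
    have hxS : x ∈ S := ⟨hxX, fun h => hxW (subset_closure h)⟩
    have : (⟨x, hxS⟩ : S) ∈ Z.1 := by rw [← hOZ]; exact hxO
    exact ⟨⟨x, hxS⟩, this, rfl⟩
  have hKU : K ⊆ O ∩ (closure W)ᶜ := by
    rintro x ⟨z, hzZ, rfl⟩
    refine ⟨?_, ?_⟩
    · rw [← hOZ] at hzZ; exact hzZ
    · intro hx
      exact absurd hKclW (Set.Nonempty.ne_empty ⟨(z : E), ⟨z, hzZ, rfl⟩, hx⟩)
  obtain ⟨w, hwW, hwX⟩ := hWX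
  have hcover : X ⊆ (O ∩ (closure W)ᶜ) ∪ Kᶜ := by
    intro x hx
    by_cases hxK : x ∈ K
    · exact Or.inl (hKU hxK)
    · exact Or.inr hxK
  have h1 : (X ∩ (O ∩ (closure W)ᶜ)).Nonempty := by
    refine ⟨q, hq.1, hKU ?_⟩
    exact ⟨q₀, Z.2.2, rfl⟩
  have h2 : (X ∩ Kᶜ).Nonempty := by
    refine ⟨w, hwX, fun hwK => ?_⟩
    obtain ⟨z, _, hz⟩ := hwK
    exact (z.2.2 : (z : E) ∉ W) (hz ▸ hwW)
  obtain ⟨x, hxX, hxU, hxK⟩ := hXconn.isPreconnected _ _ hU hKc.isClosed.isOpen_compl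
    hcover h1 h2
  exact hxK (hXU ⟨hxX, hxU⟩)

/-- Density of composants: any composant of a nondegenerate continuum meets
every open set meeting `X`. -/
theorem composant_meets {E : Type*} [MetricSpace E] {X : Set E}
    (hXc : IsCompact X) (hXconn : IsConnected X) (hnd : X.Nontrivial)
    {q : E} (hq : q ∈ X) {V : Set E} (hV : IsOpen V) (hVX : (V ∩ X).Nonempty) :
    ∃ A : Set E, IsSubcontinuum X A ∧ A ≠ X ∧ q ∈ A ∧ (A ∩ V).Nonempty := by
  by_cases hqV : q ∈ V
  · refine ⟨{q}, ⟨singleton_subset_iff.mpr hq, isCompact_singleton, isConnected_singleton⟩,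
      ?_, rfl, ⟨q, rfl, hqV⟩⟩
    intro h
    obtain ⟨x, hx, y, hy, hxy⟩ := hnd
    rw [← h] at hx hy
    exact hxy (hx.trans hy.symm)
  · obtain ⟨v, hvV, hvX⟩ := hVX
    obtain ⟨ε, hε, hball⟩ := Metric.mem_nhds_iff.mp (hV.mem_nhds hvV)
    set W := ball v (ε / 2) with hWdef
    have hclW : closure W ⊆ V := by
      refine (closure_ball_subset_closedBall).trans ((closedBall_subset_ball ?_).trans hball)
      linarith
    have hWV : W ⊆ V := subset_closure.trans hclW
    have hqW : q ∈ X \ W := ⟨hq, fun h => hqV (hWV h)⟩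
    have hWX : (W ∩ X).Nonempty := ⟨v, mem_ball_self (by linarith), hvX⟩
    obtain ⟨x, hxA, hxW⟩ := bb_aux hXc hXconn isOpen_ball hWX hqW
    set A := connectedComponentIn (X \ W) q with hA
    have hsub : A ⊆ X \ W := connectedComponentIn_subset _ _
    haveI : CompactSpace (X \ W : Set E) :=
      isCompact_iff_compactSpace.mp (hXc.diff isOpen_ball)
    have hAc : IsCompact A := by
      rw [hA, connectedComponentIn_eq_image hqW]
      exact isClosed_connectedComponent.isCompact.image continuous_subtype_val
    refine ⟨A, ⟨hsub.trans diff_subset, hAc,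
      isConnected_connectedComponentIn_iff.mpr hqW⟩, ?_,
      mem_connectedComponentIn hqW, ⟨x, hxA, hclW hxW⟩⟩
    intro h
    obtain ⟨w, hwW, hwX⟩ := hWX
    have : w ∈ A := h ▸ hwX
    exact (hsub this).2 hwW

theorem composant_mono {E : Type*} [MetricSpace E] {X : Set E}
    (hX : IsIndecomposable X) {A : Set E} (hA : IsSubcontinuum X A) (hAne : A ≠ X)
    {a b : E} (ha : a ∈ A) (hb : b ∈ A) : Composant X a ⊆ Composant X b := by
  rintro x ⟨B, ⟨hB, hBne, haB⟩, hxB⟩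
  refine ⟨A ∪ B, ⟨⟨union_subset hA.1 hB.1, hA.2.1.union hB.2.1,
    IsConnected.union ⟨a, ha, haB⟩ hA.2.2 hB.2.2⟩, ?_, Or.inl hb⟩, Or.inr hxB⟩
  intro h
  exact hX ⟨A, B, hA, hB, hAne, hBne, h⟩

theorem component_outside_ball_converges
    {E : Type*} [MetricSpace E] (X : Set E)
    (hXc : IsCompact X) (hXconn : IsConnected X)
    (hnd : X.Nontrivial) (hX : IsIndecomposable X)
    (p q : E) (hp : p ∈ X) (hq : q ∈ X)
    (hcomp : Composant X q ≠ Composant X p) :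
    ∀ V : Set E, IsOpen V → (V ∩ X).Nonempty →
      ∃ r > (0:ℝ), ∀ s : ℝ, 0 < s → s < r →
        (connectedComponentIn (X \ Metric.ball p s) q ∩ V).Nonempty := by
  have hpq : p ∉ Composant X q := by
    rintro ⟨A, ⟨hAsub, hAne, hqA⟩, hpA⟩
    exact hcomp (le_antisymm (composant_mono hX hAsub hAne hqA hpA)
      (composant_mono hX hAsub hAne hpA hqA))
  intro V hV hVX
  obtain ⟨A, hAsub, hAne, hqA, hAV⟩ := composant_meets hXc hXconn hnd hq hV hVX
  have hpA : p ∉ A := fun h => hpq ⟨A, ⟨hAsub, hAne, hqA⟩, h⟩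
  have hApos : 0 < Metric.infDist p A :=
    (hAsub.2.1.isClosed.notMem_iff_infDist_pos ⟨q, hqA⟩).mp hpA
  refine ⟨Metric.infDist p A, hApos, fun s hs hsr => ?_⟩
  have hAs : A ⊆ X \ Metric.ball p s := by
    intro a ha
    refine ⟨hAsub.1 ha, fun hball => ?_⟩
    have h1 : Metric.infDist p A ≤ dist p a := Metric.infDist_le_dist_of_mem ha
    rw [mem_ball, dist_comm] at hball
    linarith
  have : A ⊆ connectedComponentIn (X \ Metric.ball p s) q :=
    hAsub.2.2.isPreconnected.subset_connectedComponentIn hqA hAs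
  obtain ⟨x, hxA, hxV⟩ := hAV
  exact ⟨x, this hxA, hxV⟩
end

section
/- Let U be a simply connected plane domain, A a generalized crosscut of U with crosscut neighborhoods V₁ and V₂ (the two components of U \ A), and shadows S_i = ∂V_i ∩ ∂U for i = 1, 2. Then S₁ ∪ S₂ = ∂U. -/
abbrev Sphere2 : Type := Metric.sphere (0 : EuclideanSpace ℝ (Fin 3)) 1

/-- An open arc: a homeomorphic image of the open unit interval `(0,1)`. -/
def IsOpenArc (A : Set Sphere2) : Prop :=
  Nonempty ((Set.Ioo (0:ℝ) 1) ≃ₜ A)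

open Set

instance sphere2Fact : Fact (Module.finrank ℝ (EuclideanSpace ℝ (Fin 3)) = 2 + 1) :=
  ⟨by simp⟩

/-- For a continuous injective real function on `[-s,s]`, some endpoint has value
below `f 0`. -/
lemma arc_step_below (f : ℝ → ℝ) (s : ℝ) (hs : 0 < s)
    (hc : ContinuousOn f (Icc (-s) s)) (hi : InjOn f (Icc (-s) s)) :
    ∃ σ ∈ ({-s, s} : Set ℝ), f σ < f 0 := by
  have h0 : (0:ℝ) ∈ Icc (-s) s := ⟨by linarith, by linarith⟩
  have hm : (-s) ∈ Icc (-s) s := ⟨le_rfl, by linarith⟩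
  have hp : s ∈ Icc (-s) s := ⟨by linarith, le_rfl⟩
  by_contra hcon
  push_neg at hcon
  have h1 : f 0 ≤ f (-s) := hcon (-s) (by left; rfl)
  have h2 : f 0 ≤ f s := hcon s (by right; rfl)
  have hne1 : f 0 ≠ f (-s) := fun h => by
    have := hi h0 hm h; linarith
  have hne2 : f 0 ≠ f s := fun h => by
    have := hi h0 hp h; linarith
  have h1' : f 0 < f (-s) := lt_of_le_of_ne h1 hne1
  have h2' : f 0 < f s := lt_of_le_of_ne h2 hne2
  set w := (f 0 + min (f (-s)) (f s)) / 2 with hw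
  have hwlt : f 0 < w := by
    have : f 0 < min (f (-s)) (f s) := lt_min h1' h2'
    simp only [hw]; linarith
  have hw1 : w ≤ min (f (-s)) (f s) := by
    have : f 0 < min (f (-s)) (f s) := lt_min h1' h2'
    simp only [hw]; linarith
  have hI1 : Icc (-s) 0 ⊆ Icc (-s) s := Icc_subset_Icc le_rfl (by linarith)
  have hI2 : Icc 0 s ⊆ Icc (-s) s := Icc_subset_Icc (by linarith) le_rfl
  obtain ⟨t₁, ht₁, hft₁⟩ := intermediate_value_Icc' (by linarith : (-s:ℝ) ≤ 0)
    (hc.mono hI1) (⟨le_of_lt hwlt, le_trans hw1 (min_le_left _ _)⟩ : w ∈ Icc (f 0) (f (-s)))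
  obtain ⟨t₂, ht₂, hft₂⟩ := intermediate_value_Icc (by linarith : (0:ℝ) ≤ s)
    (hc.mono hI2) (⟨le_of_lt hwlt, le_trans hw1 (min_le_right _ _)⟩ : w ∈ Icc (f 0) (f s))
  have heq : t₁ = t₂ := hi (hI1 ht₁) (hI2 ht₂) (by rw [hft₁, hft₂])
  have ht0 : t₁ = 0 := le_antisymm ht₁.2 (heq ▸ ht₂.1)
  rw [ht0] at hft₁
  exact ne_of_lt hwlt hft₁

/-- If some endpoint value is below `f 0`, every value in between is attained at a
nonzero parameter. -/
lemma arc_step_attain (f : ℝ → ℝ) (s σ : ℝ) (hs : 0 < s) (hσ : σ ∈ ({-s, s} : Set ℝ))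
    (hc : ContinuousOn f (Icc (-s) s)) (w : ℝ) (hw : w ∈ Ioo (f σ) (f 0)) :
    ∃ t ∈ Icc (-s) s, t ≠ 0 ∧ f t = w := by
  have hI1 : Icc (-s) 0 ⊆ Icc (-s) s := Icc_subset_Icc le_rfl (by linarith)
  have hI2 : Icc 0 s ⊆ Icc (-s) s := Icc_subset_Icc (by linarith) le_rfl
  rcases hσ with h | h
  · rw [h] at hw
    obtain ⟨t, ht, hft⟩ := intermediate_value_Icc (by linarith : (-s:ℝ) ≤ 0)
      (hc.mono hI1) (⟨le_of_lt hw.1, le_of_lt hw.2⟩ : w ∈ Icc (f (-s)) (f 0))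
    refine ⟨t, hI1 ht, fun h0 => ?_, hft⟩
    rw [h0] at hft
    exact ne_of_gt hw.2 hft
  · rw [mem_singleton_iff] at h
    rw [h] at hw
    obtain ⟨t, ht, hft⟩ := intermediate_value_Icc' (by linarith : (0:ℝ) ≤ s)
      (hc.mono hI2) (⟨le_of_lt hw.1, le_of_lt hw.2⟩ : w ∈ Icc (f s) (f 0))
    refine ⟨t, hI2 ht, fun h0 => ?_, hft⟩
    rw [h0] at hft
    exact ne_of_gt hw.2 hft

/-- A nonempty open subset of the sphere cannot be contained in an open arc. -/
lemma no_open_in_arc (A : Set Sphere2) (hA : IsOpenArc A) (W : Set Sphere2)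
    (hWo : IsOpen W) (hWA : W ⊆ A) (q : Sphere2) (hq : q ∉ W) : W = ∅ := by
  classical
  by_contra hne
  obtain ⟨a, ha⟩ := Set.nonempty_iff_ne_empty.mpr hne
  obtain ⟨e⟩ := hA
  set φ := stereographic' 2 q with hφ
  have hγc : Continuous φ.symm := by
    have h := φ.symm.continuousOn
    rw [OpenPartialHomeomorph.symm_source, stereographic'_target] at h
    exact continuousOn_univ.mp h
  have hγi : Function.Injective φ.symm := by
    have h := φ.symm.injOn
    rw [OpenPartialHomeomorph.symm_source, stereographic'_target] at h
    exact Set.injOn_univ.mp h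
  have haq : a ∈ φ.source := by
    rw [hφ, stereographic'_source]
    exact fun h => hq (mem_singleton_iff.mp h ▸ ha)
  set c := φ a with hc
  have hca : φ.symm c = a := φ.left_inv haq
  have hcT : c ∈ φ.symm ⁻¹' W := by
    simp only [mem_preimage, hca]; exact ha
  obtain ⟨r, hr, hball⟩ := Metric.isOpen_iff.mp (hWo.preimage hγc) c hcT
  have hmemA : ∀ p ∈ Metric.ball c r, (φ.symm p : Sphere2) ∈ A := fun p hp => hWA (hball hp)
  set F : EuclideanSpace ℝ (Fin 2) → ℝ := fun p =>
    if h : (φ.symm p : Sphere2) ∈ A then ((e.symm ⟨φ.symm p, h⟩ : Set.Ioo (0:ℝ) 1) : ℝ)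
    else 0 with hF
  have hFeq : ∀ p (h : (φ.symm p : Sphere2) ∈ A),
      F p = ((e.symm ⟨φ.symm p, h⟩ : Set.Ioo (0:ℝ) 1) : ℝ) := fun p h => dif_pos h
  have hFc : ContinuousOn F (Metric.ball c r) := by
    rw [continuousOn_iff_continuous_restrict]
    have hres : (Metric.ball c r).domRestrict F =
        fun p : Metric.ball c r =>
          ((e.symm ⟨φ.symm ↑p, hmemA _ p.2⟩ : Set.Ioo (0:ℝ) 1) : ℝ) :=
      funext fun p => hFeq _ _
    rw [hres]
    exact continuous_subtype_val.comp (e.symm.continuous.comp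
      (Continuous.subtype_mk (hγc.comp continuous_subtype_val) _))
  have hFi : InjOn F (Metric.ball c r) := by
    intro p hp p' hp' hpp
    have hpp' := ((hFeq p (hmemA p hp)).symm.trans hpp).trans (hFeq p' (hmemA p' hp'))
    have h1 := e.symm.injective (Subtype.coe_injective hpp')
    exact hγi (congrArg Subtype.val h1)
  set s := r / 2 with hsdef
  have hs : 0 < s := half_pos hr
  have hsr : s < r := half_lt_self hr
  have hunit : ∀ i : Fin 2, ‖EuclideanSpace.single i (1:ℝ)‖ = 1 := by
    intro i; rw [EuclideanSpace.norm_single]; simp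
  have hmb : ∀ t ∈ Icc (-s) s, ∀ i : Fin 2,
      c + t • EuclideanSpace.single i (1:ℝ) ∈ Metric.ball c r := by
    intro t ht i
    rw [Metric.mem_ball, dist_eq_norm, add_sub_cancel_left, norm_smul, hunit, mul_one,
      Real.norm_eq_abs]
    have := abs_le.mpr ⟨ht.1, ht.2⟩
    linarith
  set g : Fin 2 → ℝ → ℝ := fun i t => F (c + t • EuclideanSpace.single i (1:ℝ)) with hg
  have hgc : ∀ i, ContinuousOn (g i) (Icc (-s) s) := fun i =>
    hFc.comp ((continuous_const.add (continuous_id.smul continuous_const)).continuousOn)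
      (fun t ht => hmb t ht i)
  have hgi : ∀ i, InjOn (g i) (Icc (-s) s) := by
    intro i t ht t' ht' he
    have h1 := hFi (hmb t ht i) (hmb t' ht' i) he
    have h2 : t • EuclideanSpace.single i (1:ℝ) = t' • EuclideanSpace.single i (1:ℝ) :=
      add_left_cancel h1
    have hu : EuclideanSpace.single i (1:ℝ) ≠ 0 := by
      intro h
      have := congrArg norm h
      rw [hunit] at this
      simp at this
    exact smul_left_injective ℝ hu h2
  have hg0 : ∀ i, g i 0 = F c := by intro i; simp [hg]
  have hcross : ∀ t ∈ Icc (-s) s, ∀ t' ∈ Icc (-s) s, g 0 t = g 1 t' → t = 0 := by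
    intro t ht t' ht' he
    have h1 := hFi (hmb t ht 0) (hmb t' ht' 1) he
    have h2 : t • EuclideanSpace.single (0 : Fin 2) (1:ℝ) =
        t' • EuclideanSpace.single (1 : Fin 2) (1:ℝ) := add_left_cancel h1
    have h3 : (t • EuclideanSpace.single (0 : Fin 2) (1:ℝ)) 0 =
        (t' • EuclideanSpace.single (1 : Fin 2) (1:ℝ)) 0 := by rw [h2]
    simpa [EuclideanSpace.single_apply] using h3
  obtain ⟨σ₀, hσ₀m, hσ₀⟩ := arc_step_below (g 0) s hs (hgc 0) (hgi 0)
  obtain ⟨σ₁, hσ₁m, hσ₁⟩ := arc_step_below (g 1) s hs (hgc 1) (hgi 1)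
  rw [hg0 0] at hσ₀
  rw [hg0 1] at hσ₁
  set w := (max (g 0 σ₀) (g 1 σ₁) + F c) / 2 with hw
  have hmax : max (g 0 σ₀) (g 1 σ₁) < F c := max_lt hσ₀ hσ₁
  have hw0 : w ∈ Ioo (g 0 σ₀) (g 0 0) := by
    rw [hg0 0]
    constructor
    · have := le_max_left (g 0 σ₀) (g 1 σ₁); simp only [hw]; linarith
    · simp only [hw]; linarith
  have hw1 : w ∈ Ioo (g 1 σ₁) (g 1 0) := by
    rw [hg0 1]
    constructor
    · have := le_max_right (g 0 σ₀) (g 1 σ₁); simp only [hw]; linarith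
    · simp only [hw]; linarith
  obtain ⟨t₀, ht₀m, ht₀ne, ht₀⟩ := arc_step_attain (g 0) s σ₀ hs hσ₀m (hgc 0) w hw0
  obtain ⟨t₁, ht₁m, ht₁ne, ht₁⟩ := arc_step_attain (g 1) s σ₁ hs hσ₁m (hgc 1) w hw1
  exact ht₀ne (hcross t₀ ht₀m t₁ ht₁m (ht₀.trans ht₁.symm))

theorem shadows_union_eq_boundary
    (U : Set Sphere2) (hUo : IsOpen U) (hUconn : IsConnected U)
    (hUsc : SimplyConnectedSpace U) (hUbd : (frontier U).Nontrivial)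
    (A : Set Sphere2) (hAU : A ⊆ U) (hA : IsOpenArc A)
    (hAend : closure A \ A ⊆ frontier U)
    (V₁ V₂ : Set Sphere2) (hne : V₁ ≠ V₂)
    (h₁ : ∃ x ∈ U \ A, V₁ = connectedComponentIn (U \ A) x)
    (h₂ : ∃ x ∈ U \ A, V₂ = connectedComponentIn (U \ A) x)
    (hcut : U = V₁ ∪ A ∪ V₂) :
    (frontier V₁ ∩ frontier U) ∪ (frontier V₂ ∩ frontier U) = frontier U := by
  obtain ⟨x₁, hx₁, hV₁def⟩ := h₁
  obtain ⟨x₂, hx₂, hV₂def⟩ := h₂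
  have hV₁U : V₁ ⊆ U := hV₁def ▸ (connectedComponentIn_subset _ _).trans diff_subset
  have hV₂U : V₂ ⊆ U := hV₂def ▸ (connectedComponentIn_subset _ _).trans diff_subset
  have hfr : ∀ x ∈ frontier U, x ∉ U := by
    intro x hx hxU
    rw [frontier, hUo.interior_eq] at hx
    exact hx.2 hxU
  obtain ⟨q, hqf, -, -, -⟩ := hUbd
  have hkey : A ⊆ closure (V₁ ∪ V₂) := by
    by_contra hcon
    rw [not_subset] at hcon
    obtain ⟨a, haA, haC⟩ := hcon
    set W := U ∩ (closure (V₁ ∪ V₂))ᶜ with hWdef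
    have hWo : IsOpen W := hUo.inter isClosed_closure.isOpen_compl
    have hWA : W ⊆ A := by
      rintro u ⟨huU, huC⟩
      rcases (hcut ▸ huU : u ∈ V₁ ∪ A ∪ V₂) with (h | h) | h
      · exact absurd (subset_closure (Set.mem_union_left V₂ h)) huC
      · exact h
      · exact absurd (subset_closure (Set.mem_union_right V₁ h)) huC
    have hqW : q ∉ W := fun h => hfr q hqf h.1
    have haW : a ∈ W := ⟨hAU haA, haC⟩
    rw [no_open_in_arc A hA W hWo hWA q hqW] at haW
    exact absurd haW (Set.notMem_empty a)
  apply Set.Subset.antisymm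
  · exact Set.union_subset Set.inter_subset_right Set.inter_subset_right
  · intro x hx
    have hxU := hfr x hx
    have hxcl : x ∈ closure U := frontier_subset_closure hx
    have hcl : closure U ⊆ closure V₁ ∪ closure V₂ := by
      rw [hcut, closure_union, closure_union]
      have hA' : closure A ⊆ closure V₁ ∪ closure V₂ := by
        have h := closure_mono hkey
        rwa [closure_closure, closure_union] at h
      exact Set.union_subset (Set.union_subset Set.subset_union_left hA')
        Set.subset_union_right
    rcases hcl hxcl with h | h
    · exact Or.inl ⟨⟨h, fun hi => hxU (hV₁U (interior_subset hi))⟩, hx⟩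
    · exact Or.inr ⟨⟨h, fun hi => hxU (hV₂U (interior_subset hi))⟩, hx⟩
end
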